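/- Let k ≥ 1, let G be a finite connected simple graph that is (P3+kP2)-free and contains a vertex set A inducing P3+(k-1)P2, and assume that every minimum dominating set of G is a stable set. Let D be a minimum dominating set of G. If there exists a vertex v ∈ B ∩ D which has a private neighbour c ∈ N(v) ∩ C with respect to D and a private neighbour b ∈ N(v) with respect to D such that c is not adjacent to b, then |B ∩ D| ≤ (k+1)·|A|. -/

import Mathlib

open SimpleGraph

/-- The disjoint union of a path `P₃` and `k` copies of `P₂`. -/
def P3kP2 (k : ℕ) : SimpleGraph (Fin 3 ⊕ Fin k × Fin 2) :=
  SimpleGraph.fromRel fun x y =>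
    match x, y with
    | Sum.inl a, Sum.inl b => (b : ℕ) = (a : ℕ) + 1
    | Sum.inr a, Sum.inr b => a.1 = b.1 ∧ a.2 ≠ b.2
    | _, _ => False

/-- `G` contains no induced subgraph isomorphic to `H`. -/
def HFree {V W : Type*} (G : SimpleGraph V) (H : SimpleGraph W) : Prop :=
  IsEmpty (H ↪g G)

/-- `D` is a dominating set of `G`. -/
def IsDomSet {V : Type*} (G : SimpleGraph V) (D : Set V) : Prop :=
  ∀ v ∉ D, ∃ u ∈ D, G.Adj u v

/-- `D` is a minimum dominating set of `G`. -/
def IsMinDomSet {V : Type*} (G : SimpleGraph V) (D : Set V) : Prop :=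
  IsDomSet G D ∧ ∀ D' : Set V, IsDomSet G D' → D.ncard ≤ D'.ncard

/-- The distance from a vertex `v` to a set `A` of vertices. -/
noncomputable def distToSet {V : Type*} (G : SimpleGraph V) (v : V) (A : Set V) : ℕ :=
  sInf ((G.dist v) '' A)

/-- The set of vertices at distance two from `A` whose open neighbourhood is a clique. -/
def cliqueDistTwo {V : Type*} (G : SimpleGraph V) (A : Set V) : Set V :=
  {v | distToSet G v A = 2 ∧ G.IsClique (G.neighborSet v)}

/-- A vertex `c₁` is regular (w.r.t. `A` and `k`) if `c₁ ∈ 𝒞` and there are `k` further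
vertices of `𝒞` such that all `k+1` of them are pairwise at distance at least four. -/
def IsRegularVertex {V : Type*} (G : SimpleGraph V) (k : ℕ) (A : Set V) (c₁ : V) : Prop :=
  c₁ ∈ cliqueDistTwo G A ∧ ∃ c : Fin k → V, (∀ i, c i ∈ cliqueDistTwo G A) ∧
    (∀ i, 4 ≤ G.dist c₁ (c i)) ∧ ∀ i j, i ≠ j → 4 ≤ G.dist (c i) (c j)

/-- `v` is a private neighbour of `u` with respect to the dominating set `D`:
`N[v] ∩ D = {u}`. -/
def IsPrivateNbr {V : Type*} (G : SimpleGraph V) (D : Set V) (u v : V) : Prop :=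
  (insert v (G.neighborSet v)) ∩ D = {u}

/-- A stable (independent) set of vertices. -/
def IsStable {V : Type*} (G : SimpleGraph V) (S : Set V) : Prop :=
  S.Pairwise fun u v => ¬ G.Adj u v

lemma P3kP2_adj_inl_inl {n : ℕ} (a b : Fin 3) :
    (P3kP2 n).Adj (Sum.inl a) (Sum.inl b) ↔ a ≠ b ∧ ((b : ℕ) = a + 1 ∨ (a : ℕ) = b + 1) := by
  rw [P3kP2, SimpleGraph.fromRel_adj]
  constructor
  · rintro ⟨hne, h⟩
    exact ⟨fun hh => hne (by rw [hh]), h⟩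
  · rintro ⟨hne, h⟩
    refine ⟨fun hh => hne ?_, h⟩
    injection hh

lemma P3kP2_adj_inl_inr {n : ℕ} (a : Fin 3) (q : Fin n × Fin 2) :
    ¬ (P3kP2 n).Adj (Sum.inl a) (Sum.inr q) := by
  rw [P3kP2, SimpleGraph.fromRel_adj]
  rintro ⟨-, h | h⟩ <;> exact h

lemma P3kP2_adj_inr_inl {n : ℕ} (a : Fin 3) (q : Fin n × Fin 2) :
    ¬ (P3kP2 n).Adj (Sum.inr q) (Sum.inl a) := by
  rw [P3kP2, SimpleGraph.fromRel_adj]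
  rintro ⟨-, h | h⟩ <;> exact h

lemma P3kP2_adj_inr_inr {n : ℕ} (p q : Fin n × Fin 2) :
    (P3kP2 n).Adj (Sum.inr p) (Sum.inr q) ↔ p.1 = q.1 ∧ p.2 ≠ q.2 := by
  rw [P3kP2, SimpleGraph.fromRel_adj]
  constructor
  · rintro ⟨hne, h | h⟩
    · exact h
    · exact ⟨h.1.symm, Ne.symm h.2⟩
  · rintro ⟨h1, h2⟩
    refine ⟨fun hh => h2 ?_, Or.inl ⟨h1, h2⟩⟩
    injection hh with hh'
    rw [hh']

/-- If `G` is `(P3+(m+1)P2)`-free and contains an induced `P3+mP2` via `f`, then there is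
no edge `xy` with both endpoints non-adjacent to (and distinct from) all vertices of `f`. -/
lemma no_far_edge {V : Type*} {m : ℕ} {G : SimpleGraph V}
    (hfree : HFree G (P3kP2 (m + 1))) (f : P3kP2 m ↪g G)
    {x y : V}
    (hx : ∀ p, ¬ G.Adj x (f p)) (hx' : ∀ p, x ≠ f p)
    (hy : ∀ p, ¬ G.Adj y (f p)) (hy' : ∀ p, y ≠ f p)
    (hxy : G.Adj x y) : False := by
  classical
  set F : Fin 3 ⊕ Fin (m + 1) × Fin 2 → V :=
    Sum.elim (fun j => f (Sum.inl j))
      (fun q : Fin (m + 1) × Fin 2 =>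
        if h : (q.1 : ℕ) < m then f (Sum.inr (⟨(q.1 : ℕ), h⟩, q.2))
        else if q.2 = 0 then x else y) with hF
  have hxny : x ≠ y := hxy.ne
  have hinj : Function.Injective F := by
    rintro (jp | ⟨ip, jp⟩) (jq | ⟨iq, jq⟩) h <;> simp only [hF, Sum.elim_inl, Sum.elim_inr] at h
    · have := f.injective h
      injection this with h'
      rw [h']
    · split_ifs at h with h1 h2 <;>
        first
          | exact absurd (f.injective h) (by simp)
          | exact absurd h (hx' _) | exact absurd h.symm (hx' _)
          | exact absurd h (hy' _) | exact absurd h.symm (hy' _)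
    · split_ifs at h with h1 h2 <;>
        first
          | exact absurd (f.injective h) (by simp)
          | exact absurd h (hx' _) | exact absurd h.symm (hx' _)
          | exact absurd h (hy' _) | exact absurd h.symm (hy' _)
    · have hipl := ip.isLt
      have hiql := iq.isLt
      by_cases h1 : (ip : ℕ) < m <;> by_cases h2 : (iq : ℕ) < m
      · rw [dif_pos h1, dif_pos h2] at h
        have h' := f.injective h
        injection h' with h''
        have hfst : (ip : ℕ) = (iq : ℕ) := by
          have := congrArg (fun z : Fin m × Fin 2 => (z.1 : ℕ)) h''
          simpa using this
        have hsnd : jp = jq := by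
          have := congrArg (fun z : Fin m × Fin 2 => z.2) h''
          simpa using this
        exact congrArg Sum.inr (Prod.ext (Fin.ext hfst) hsnd)
      · rw [dif_pos h1, dif_neg h2] at h
        split_ifs at h with h3
        · exact absurd h.symm (hx' _)
        · exact absurd h.symm (hy' _)
      · rw [dif_neg h1, dif_pos h2] at h
        split_ifs at h with h3
        · exact absurd h (hx' _)
        · exact absurd h (hy' _)
      · rw [dif_neg h1, dif_neg h2] at h
        have hii : ip = iq := Fin.ext (by omega)
        have hjj : jp = jq := by
          by_cases hj0 : jp = 0
          · by_cases hq0 : jq = 0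
            · rw [hj0, hq0]
            · rw [if_pos hj0, if_neg hq0] at h
              exact absurd h hxny
          · by_cases hq0 : jq = 0
            · rw [if_neg hj0, if_pos hq0] at h
              exact absurd h.symm hxny
            · have hp' : (jp : ℕ) ≠ 0 := fun hh => hj0 (Fin.ext (by simp [hh]))
              have hq' : (jq : ℕ) ≠ 0 := fun hh => hq0 (Fin.ext (by simp [hh]))
              have hjp := jp.isLt
              have hjq := jq.isLt
              exact Fin.ext (by omega)
        rw [hii, hjj]
  have hrel : ∀ p q, G.Adj (F p) (F q) ↔ (P3kP2 (m + 1)).Adj p q := by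
    rintro (jp | ⟨ip, jp⟩) (jq | ⟨iq, jq⟩) <;>
      simp only [hF, Sum.elim_inl, Sum.elim_inr]
    · rw [f.map_rel_iff, P3kP2_adj_inl_inl, P3kP2_adj_inl_inl]
    · rw [iff_false_intro (P3kP2_adj_inl_inr _ _), iff_false]
      split_ifs with h1 h2
      · rw [f.map_rel_iff]
        exact P3kP2_adj_inl_inr _ _
      · exact fun hh => hx _ hh.symm
      · exact fun hh => hy _ hh.symm
    · rw [iff_false_intro (P3kP2_adj_inr_inl _ _), iff_false]
      split_ifs with h1 h2
      · rw [f.map_rel_iff]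
        exact P3kP2_adj_inr_inl _ _
      · exact fun hh => hx _ hh
      · exact fun hh => hy _ hh
    · rw [P3kP2_adj_inr_inr]
      have hipl := ip.isLt
      have hiql := iq.isLt
      by_cases h1 : (ip : ℕ) < m <;> by_cases h2 : (iq : ℕ) < m
      · rw [dif_pos h1, dif_pos h2, f.map_rel_iff, P3kP2_adj_inr_inr]
        constructor
        · rintro ⟨ha, hb⟩
          have : (ip : ℕ) = (iq : ℕ) := by simpa using congrArg Fin.val ha
          exact ⟨Fin.ext this, hb⟩
        · rintro ⟨ha, hb⟩
          have : (ip : ℕ) = (iq : ℕ) := by simpa using congrArg Fin.val ha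
          exact ⟨Fin.ext this, hb⟩
      · rw [dif_pos h1, dif_neg h2]
        have hne' : ¬((ip, jp).1 = (iq, jq).1 ∧ (ip, jp).2 ≠ (iq, jq).2) := by
          rintro ⟨ha, -⟩
          have : (ip : ℕ) = (iq : ℕ) := by simpa using congrArg Fin.val ha
          omega
        rw [iff_false_intro hne', iff_false]
        split_ifs with h3
        · exact fun hh => hx _ hh.symm
        · exact fun hh => hy _ hh.symm
      · rw [dif_neg h1, dif_pos h2]
        have hne' : ¬((ip, jp).1 = (iq, jq).1 ∧ (ip, jp).2 ≠ (iq, jq).2) := by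
          rintro ⟨ha, -⟩
          have : (ip : ℕ) = (iq : ℕ) := by simpa using congrArg Fin.val ha
          omega
        rw [iff_false_intro hne', iff_false]
        split_ifs with h3
        · exact fun hh => hx _ hh
        · exact fun hh => hy _ hh
      · rw [dif_neg h1, dif_neg h2]
        have hii : ip = iq := Fin.ext (by omega)
        fin_cases jp <;> fin_cases jq <;> simp only [Fin.isValue, if_pos rfl]
        · simp [hii, G.irrefl]
        · simp [hii, hxy]
        · simp [hii, hxy.symm]
        · simp [hii, G.irrefl]
  have hE : IsEmpty (P3kP2 (m + 1) ↪g G) := hfree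
  exact hE.false ⟨⟨F, hinj⟩, hrel _ _⟩

theorem stmt10
    {V : Type*} [Fintype V] (k : ℕ) (hk : 1 ≤ k) (G : SimpleGraph V)
    (hconn : G.Connected) (hfree : HFree G (P3kP2 k))
    (A : Set V) (hA : ∃ f : P3kP2 (k-1) ↪g G, Set.range f = A)
    (B C : Set V) (hB : B = {v | distToSet G v A = 1})
    (hC : C = {v | distToSet G v A = 2})
    (hstable : ∀ D : Set V, IsMinDomSet G D → IsStable G D)
    (D : Set V) (hD : IsMinDomSet G D)
    (v : V) (hv : v ∈ B ∩ D) (c b : V) (hcv : c ∈ G.neighborSet v ∩ C)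
    (hbv : b ∈ G.neighborSet v) (hpc : IsPrivateNbr G D v c) (hpb : IsPrivateNbr G D v b)
    (hne : c ≠ b) (hnadj : ¬ G.Adj c b) :
    (B ∩ D).ncard ≤ (k + 1) * A.ncard := by
  classical
  obtain ⟨m, rfl⟩ : ∃ m, k = m + 1 := ⟨k - 1, (Nat.succ_pred_eq_of_pos hk).symm⟩
  obtain ⟨f, hfA⟩ : ∃ f : P3kP2 m ↪g G, Set.range ⇑f = A := hA
  have hAmem : ∀ p, f p ∈ A := fun p => hfA ▸ Set.mem_range_self p
  -- distance helpers
  have hdist_adj : ∀ {z w : V}, G.Adj z w → G.dist z w ≤ 1 := by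
    intro z w h
    simpa using SimpleGraph.dist_le h.toWalk
  have himg_ne : ∀ z : V, ((G.dist z) '' A).Nonempty :=
    fun z => ⟨G.dist z (f (Sum.inl 0)), ⟨f (Sum.inl 0), hAmem _, rfl⟩⟩
  have hdts_le : ∀ (z : V) (p), distToSet G z A ≤ G.dist z (f p) :=
    fun z p => Nat.sInf_le ⟨f p, hAmem p, rfl⟩
  have hdts_le' : ∀ (z : V) (a), a ∈ A → distToSet G z A ≤ G.dist z a :=
    fun z a ha => Nat.sInf_le ⟨a, ha, rfl⟩
  have hdts_mem : ∀ z : V, ∃ a ∈ A, G.dist z a = distToSet G z A :=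
    fun z => Nat.sInf_mem (himg_ne z)
  -- vertices far from A
  have hfar : ∀ z : V, 2 ≤ distToSet G z A →
      (∀ p, ¬ G.Adj z (f p)) ∧ (∀ p, z ≠ f p) := by
    intro z hz
    have hz2 : ∀ p, 2 ≤ G.dist z (f p) := fun p => le_trans hz (hdts_le z p)
    constructor
    · intro p hadj
      have h1 := hdist_adj hadj
      have h2 := hz2 p
      omega
    · intro p hzp
      have h2 := hz2 p
      rw [hzp, SimpleGraph.dist_self] at h2
      omega
  -- no edges between vertices far from A
  have hCnoedge : ∀ z w : V, 2 ≤ distToSet G z A → 2 ≤ distToSet G w A → ¬ G.Adj z w := by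
    intro z w hz hw hadj
    obtain ⟨hz1, hz2⟩ := hfar z hz
    obtain ⟨hw1, hw2⟩ := hfar w hw
    exact no_far_edge hfree f hz1 hz2 hw1 hw2 hadj
  -- every vertex is at distance at most 2 from A
  have hdle2 : ∀ z : V, distToSet G z A ≤ 2 := by
    intro z
    by_contra hgt
    push_neg at hgt
    obtain ⟨a, haA, hda⟩ := hdts_mem z
    obtain ⟨p, hp⟩ := hconn.exists_walk_length_eq_dist z a
    cases p with
    | nil =>
        rw [SimpleGraph.Walk.length_nil] at hp
        omega
    | @cons _ y _ hadj q =>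
        have hyfar : 2 ≤ distToSet G y A := by
          by_contra hy
          push_neg at hy
          obtain ⟨a', ha', hda'⟩ := hdts_mem y
          have h1 : G.dist z a' ≤ G.dist z y + G.dist y a' := hconn.dist_triangle
          have h2 : G.dist z y ≤ 1 := hdist_adj hadj
          have h3 : distToSet G z A ≤ G.dist z a' := hdts_le' z a' ha'
          omega
        exact hCnoedge z y (by omega) hyfar hadj
  -- basic facts about v, b, c
  obtain ⟨hvB, hvD⟩ := hv
  have hadj_vc : G.Adj v c := hcv.1
  have hcC : distToSet G c A = 2 := by
    have h := hcv.2
    rw [hC] at h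
    exact h
  have hadj_vb : G.Adj v b := hbv
  have hst : IsStable G D := hstable D hD
  have hbD : b ∉ D := by
    intro hbD'
    have h1 : b ∈ (insert b (G.neighborSet b)) ∩ D := ⟨Set.mem_insert _ _, hbD'⟩
    rw [hpb] at h1
    have h2 : b = v := h1
    rw [h2] at hadj_vb
    exact G.irrefl hadj_vb
  have hcD : c ∉ D := by
    intro hcD'
    have h1 : c ∈ (insert c (G.neighborSet c)) ∩ D := ⟨Set.mem_insert _ _, hcD'⟩
    rw [hpc] at h1
    have h2 : c = v := h1
    rw [h2] at hadj_vc
    exact G.irrefl hadj_vc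
  have hpriv_b : ∀ u ∈ D, u ≠ v → ¬ G.Adj b u := by
    intro u hu hnuv hadj
    apply hnuv
    have h1 : u ∈ (insert b (G.neighborSet b)) ∩ D := ⟨Set.mem_insert_of_mem _ hadj, hu⟩
    rw [hpb] at h1
    exact h1
  have hpriv_c : ∀ u ∈ D, u ≠ v → ¬ G.Adj c u := by
    intro u hu hnuv hadj
    apply hnuv
    have h1 : u ∈ (insert c (G.neighborSet c)) ∩ D := ⟨Set.mem_insert_of_mem _ hadj, hu⟩
    rw [hpc] at h1
    exact h1
  -- the set C'' and minimum covers of it from D \ {v}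
  set C'' : Set V :=
    {z | distToSet G z A = 2 ∧ z ∉ D ∧ ¬ G.Adj v z ∧ z ≠ v ∧ ¬ G.Adj b z ∧ z ≠ b} with hC''
  set PP : Set V → Prop := fun S => S ⊆ D \ {v} ∧ ∀ z ∈ C'', ∃ s ∈ S, G.Adj s z with hPP
  have hP0 : PP (D \ {v}) := by
    constructor
    · exact subset_rfl
    · intro z hz
      rw [hC''] at hz
      obtain ⟨u, hu, hadj⟩ := hD.1 z hz.2.1
      refine ⟨u, ⟨hu, ?_⟩, hadj⟩
      simp only [Set.mem_singleton_iff]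
      rintro rfl
      exact hz.2.2.1 hadj
  set NN : Set ℕ := {n | ∃ S, PP S ∧ S.ncard = n} with hNN
  have hNNne : NN.Nonempty := ⟨(D \ {v}).ncard, D \ {v}, hP0, rfl⟩
  obtain ⟨S, hPS, hScard⟩ : ∃ S, PP S ∧ S.ncard = sInf NN := Nat.sInf_mem hNNne
  -- every member of a minimum cover has a private vertex in C''
  have hpriv : ∀ s ∈ S, ∃ z ∈ C'', G.Adj s z ∧ ∀ s' ∈ S, s' ≠ s → ¬ G.Adj s' z := by
    intro s hs
    by_contra hcon
    push_neg at hcon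
    have hP' : PP (S \ {s}) := by
      constructor
      · exact (Set.diff_subset).trans hPS.1
      · intro z hz
        obtain ⟨s1, hs1, hadj1⟩ := hPS.2 z hz
        by_cases hss : s1 = s
        · subst hss
          obtain ⟨s2, hs2, hne2, hadj2⟩ := hcon z hz hadj1
          exact ⟨s2, ⟨hs2, by simpa using hne2⟩, hadj2⟩
        · exact ⟨s1, ⟨hs1, by simpa using hss⟩, hadj1⟩
    have hlt : (S \ {s}).ncard < S.ncard :=
      Set.ncard_diff_singleton_lt_of_mem hs (Set.toFinite S)
    have hle : sInf NN ≤ (S \ {s}).ncard := Nat.sInf_le ⟨S \ {s}, hP', rfl⟩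
    omega
  -- the minimum cover has at most m elements
  have hSm : S.ncard ≤ m := by
    by_contra hgt
    push_neg at hgt
    have hfin : S.Finite := Set.toFinite S
    have hcard : m + 1 ≤ hfin.toFinset.card := by
      rw [← Set.ncard_eq_toFinset_card S hfin]
      omega
    obtain ⟨T, hTsub, hTcard⟩ := Finset.exists_subset_card_eq hcard
    have hTcard' : Fintype.card ↥T = m + 1 := by rw [Fintype.card_coe]; exact hTcard
    set e := Fintype.equivFinOfCardEq hTcard' with he
    set g : Fin (m + 1) → V := fun i => ((e.symm i : ↥T) : V) with hg
    have hginj : Function.Injective g := by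
      intro i j h
      exact e.symm.injective (Subtype.ext h)
    have hgS : ∀ i, g i ∈ S := by
      intro i
      have h1 : ((e.symm i : ↥T) : V) ∈ T := (e.symm i).2
      exact hfin.mem_toFinset.mp (hTsub h1)
    have hgD : ∀ i, g i ∈ D := fun i => (hPS.1 (hgS i)).1
    have hgv : ∀ i, g i ≠ v := by
      intro i
      have h1 := (hPS.1 (hgS i)).2
      simpa using h1
    choose xw hxw1 hxw2 using fun i => hpriv (g i) (hgS i)
    have hxwC : ∀ i, distToSet G (xw i) A = 2 ∧ xw i ∉ D ∧ ¬ G.Adj v (xw i) ∧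
        xw i ≠ v ∧ ¬ G.Adj b (xw i) ∧ xw i ≠ b := by
      intro i
      have h1 := hxw1 i
      rw [hC''] at h1
      exact h1
    have hxadj : ∀ i, G.Adj (g i) (xw i) := fun i => (hxw2 i).1
    have hxpriv : ∀ i j, i ≠ j → ¬ G.Adj (g j) (xw i) := by
      intro i j hij
      exact (hxw2 i).2 (g j) (hgS j) (fun h => hij (hginj h).symm)
    -- all required adjacency and distinctness facts
    have nadj_vb' : G.Adj v b := hadj_vb
    have nadj_bc : ¬ G.Adj b c := fun h => hnadj h.symm
    have nadj_vg : ∀ i, ¬ G.Adj v (g i) := fun i => hst hvD (hgD i) (Ne.symm (hgv i))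
    have nadj_bg : ∀ i, ¬ G.Adj b (g i) := fun i => hpriv_b (g i) (hgD i) (hgv i)
    have nadj_cg : ∀ i, ¬ G.Adj c (g i) := fun i => hpriv_c (g i) (hgD i) (hgv i)
    have nadj_gg : ∀ i j, i ≠ j → ¬ G.Adj (g i) (g j) := by
      intro i j hij
      exact hst (hgD i) (hgD j) (fun h => hij (hginj h))
    have nadj_xx : ∀ i j, i ≠ j → ¬ G.Adj (xw i) (xw j) := by
      intro i j _
      exact hCnoedge _ _ (le_of_eq (hxwC i).1.symm) (le_of_eq (hxwC j).1.symm)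
    have nadj_cx : ∀ i, ¬ G.Adj c (xw i) :=
      fun i => hCnoedge _ _ (le_of_eq hcC.symm) (le_of_eq (hxwC i).1.symm)
    have nadj_vx : ∀ i, ¬ G.Adj v (xw i) := fun i => (hxwC i).2.2.1
    have nadj_bx : ∀ i, ¬ G.Adj b (xw i) := fun i => (hxwC i).2.2.2.2.1
    have ne_bv : b ≠ v := Ne.symm hadj_vb.ne
    have ne_cv : c ≠ v := Ne.symm hadj_vc.ne
    have ne_gb : ∀ i, g i ≠ b := fun i h => hbD (h ▸ hgD i)
    have ne_gc : ∀ i, g i ≠ c := fun i h => hcD (h ▸ hgD i)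
    have ne_xv : ∀ i, xw i ≠ v := fun i => (hxwC i).2.2.2.1
    have ne_xb : ∀ i, xw i ≠ b := fun i => (hxwC i).2.2.2.2.2
    have ne_xc : ∀ i, xw i ≠ c := by
      intro i h
      exact (nadj_vx i) (by rw [h]; exact hadj_vc)
    have ne_xg : ∀ i j, xw i ≠ g j := by
      intro i j h
      exact (hxwC i).2.1 (by rw [h]; exact hgD j)
    have ne_xx : ∀ i j, i ≠ j → xw i ≠ xw j := by
      intro i j hij h
      exact hxpriv j i (Ne.symm hij) (by rw [← h]; exact hxadj i)
    -- build the forbidden embedding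
    set W : Fin 3 ⊕ Fin (m + 1) × Fin 2 → V :=
      Sum.elim (fun j => if j = 0 then b else if j = 1 then v else c)
        (fun q : Fin (m + 1) × Fin 2 => if q.2 = 0 then g q.1 else xw q.1) with hW
    have hWinj : Function.Injective W := by
      rintro (jp | ⟨ip, jp⟩) (jq | ⟨iq, jq⟩) h <;>
        simp only [hW, Sum.elim_inl, Sum.elim_inr] at h
      · fin_cases jp <;> fin_cases jq <;> simp only [] at h <;>
          first
            | rfl
            | exact absurd h ne_bv
            | exact absurd h.symm ne_bv
            | exact absurd h (Ne.symm hne)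
            | exact absurd h.symm (Ne.symm hne)
            | exact absurd h ne_cv
            | exact absurd h.symm ne_cv
            | exact absurd h (Ne.symm ne_cv)
            | exact absurd h (Ne.symm ne_bv)
            | exact absurd h hne
            | exact absurd h.symm hne
      · fin_cases jp <;> fin_cases jq <;>
          first
            | exact absurd h.symm (ne_gb iq)
            | exact absurd h.symm (ne_xb iq)
            | exact absurd h.symm (fun hh : g iq = v => (hgv iq) hh)
            | exact absurd h.symm (ne_xv iq)
            | exact absurd h.symm (ne_gc iq)
            | exact absurd h.symm (ne_xc iq)
      · fin_cases jp <;> fin_cases jq <;>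
          first
            | exact absurd h (ne_gb ip).symm ▸ (by exact absurd h (fun hh => (ne_gb ip) hh))
            | exact absurd h (fun hh => (ne_gb ip) hh)
            | exact absurd h (fun hh => (ne_xb ip) hh)
            | exact absurd h (fun hh => (hgv ip) hh)
            | exact absurd h (fun hh => (ne_xv ip) hh)
            | exact absurd h (fun hh => (ne_gc ip) hh)
            | exact absurd h (fun hh => (ne_xc ip) hh)
      · fin_cases jp <;> fin_cases jq
        · by_cases hii : ip = iq
          · rw [hii]
          · exact absurd (hginj h) hii
        · exact absurd h.symm (ne_xg iq ip)
        · exact absurd h (ne_xg ip iq)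
        · by_cases hii : ip = iq
          · rw [hii]
          · exact absurd h (ne_xx ip iq hii)
    have hWrel : ∀ p q, G.Adj (W p) (W q) ↔ (P3kP2 (m + 1)).Adj p q := by
      rintro (jp | ⟨ip, jp⟩) (jq | ⟨iq, jq⟩) <;>
        simp only [hW, Sum.elim_inl, Sum.elim_inr]
      · fin_cases jp <;> fin_cases jq
        · exact iff_of_false G.irrefl (by rw [P3kP2_adj_inl_inl]; decide)
        · exact iff_of_true hadj_vb.symm (by rw [P3kP2_adj_inl_inl]; decide)
        · exact iff_of_false nadj_bc (by rw [P3kP2_adj_inl_inl]; decide)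
        · exact iff_of_true hadj_vb (by rw [P3kP2_adj_inl_inl]; decide)
        · exact iff_of_false G.irrefl (by rw [P3kP2_adj_inl_inl]; decide)
        · exact iff_of_true hadj_vc (by rw [P3kP2_adj_inl_inl]; decide)
        · exact iff_of_false hnadj (by rw [P3kP2_adj_inl_inl]; decide)
        · exact iff_of_true hadj_vc.symm (by rw [P3kP2_adj_inl_inl]; decide)
        · exact iff_of_false G.irrefl (by rw [P3kP2_adj_inl_inl]; decide)
      · refine iff_of_false ?_ (P3kP2_adj_inl_inr _ _)
        fin_cases jp <;> fin_cases jq <;>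
          first
            | exact nadj_bg iq
            | exact nadj_bx iq
            | exact nadj_vg iq
            | exact nadj_vx iq
            | exact nadj_cg iq
            | exact nadj_cx iq
      · refine iff_of_false ?_ (P3kP2_adj_inr_inl _ _)
        fin_cases jp <;> fin_cases jq <;>
          first
            | exact fun hh => (nadj_bg ip) hh.symm
            | exact fun hh => (nadj_bx ip) hh.symm
            | exact fun hh => (nadj_vg ip) hh.symm
            | exact fun hh => (nadj_vx ip) hh.symm
            | exact fun hh => (nadj_cg ip) hh.symm
            | exact fun hh => (nadj_cx ip) hh.symm
      · rw [P3kP2_adj_inr_inr]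
        fin_cases jp <;> fin_cases jq
        · refine iff_of_false ?_ (by simp)
          by_cases hii : ip = iq
          · rw [hii]; exact G.irrefl
          · exact nadj_gg ip iq hii
        · by_cases hii : ip = iq
          · subst hii
            exact iff_of_true (hxadj ip) ⟨rfl, by simp [Fin.ext_iff]⟩
          · exact iff_of_false (fun hh => hxpriv iq ip (Ne.symm hii) hh)
              (by simp [hii])
        · by_cases hii : ip = iq
          · subst hii
            exact iff_of_true (hxadj ip).symm ⟨rfl, by simp [Fin.ext_iff]⟩
          · exact iff_of_false (fun hh => hxpriv ip iq hii hh.symm) (by simp [hii])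
        · refine iff_of_false ?_ (by simp)
          by_cases hii : ip = iq
          · rw [hii]; exact G.irrefl
          · exact nadj_xx ip iq hii
    have hE : IsEmpty (P3kP2 (m + 1) ↪g G) := hfree
    exact hE.false ⟨⟨W, hWinj⟩, hWrel _ _⟩
  -- now the domination exchange
  set T : Set V := A ∪ (D \ B) ∪ {v, b} ∪ S with hT
  have hTdom : IsDomSet G T := by
    intro z hz
    have h2 := hdle2 z
    by_cases h0 : distToSet G z A = 0
    · exfalso
      apply hz
      rw [hT]
      have : z ∈ A := by
        obtain ⟨a, ha, hda⟩ := hdts_mem z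
        rw [h0] at hda
        have : z = a := (hconn.dist_eq_zero_iff).mp hda
        rw [this]; exact ha
      exact Or.inl (Or.inl (Or.inl this))
    by_cases h1 : distToSet G z A = 1
    · obtain ⟨a, ha, hda⟩ := hdts_mem z
      rw [h1] at hda
      obtain ⟨p, hp⟩ := hconn.exists_walk_length_eq_dist z a
      rw [hda] at hp
      cases p with
      | nil => simp at hp
      | @cons _ y _ hadj q =>
          have hq0 : q.length = 0 := by
            simp only [SimpleGraph.Walk.length_cons] at hp
            omega
          have : y = a := SimpleGraph.Walk.eq_of_length_eq_zero hq0
          subst this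
          refine ⟨y, ?_, hadj.symm⟩
          rw [hT]
          exact Or.inl (Or.inl (Or.inl ha))
    -- distToSet z A = 2
    have h2' : distToSet G z A = 2 := by omega
    by_cases hzD : z ∈ D
    · exfalso
      apply hz
      rw [hT]
      refine Or.inl (Or.inl (Or.inr ⟨hzD, ?_⟩))
      rw [hB]
      simp only [Set.mem_setOf_eq]
      omega
    by_cases hzv : G.Adj v z
    · exact ⟨v, by rw [hT]; exact Or.inl (Or.inr (Set.mem_insert _ _)), hzv⟩
    have hzvne : z ≠ v := by
      rintro rfl
      apply hz
      rw [hT]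
      exact Or.inl (Or.inr (Set.mem_insert _ _))
    by_cases hzb : G.Adj b z
    · exact ⟨b, by rw [hT]; exact Or.inl (Or.inr (Set.mem_insert_of_mem _ rfl)), hzb⟩
    have hzbne : z ≠ b := by
      rintro rfl
      exact hzv hadj_vb
    have hzC'' : z ∈ C'' := by
      rw [hC'']
      exact ⟨h2', hzD, hzv, hzvne, hzb, hzbne⟩
    obtain ⟨s, hsS, hadj⟩ := hPS.2 z hzC''
    exact ⟨s, by rw [hT]; exact Or.inr hsS, hadj⟩
  -- cardinality bookkeeping
  have hmin := hD.2 T hTdom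
  have hTcard : T.ncard ≤ A.ncard + (D \ B).ncard + 2 + m := by
    rw [hT]
    calc (A ∪ (D \ B) ∪ {v, b} ∪ S).ncard
        ≤ (A ∪ (D \ B) ∪ {v, b}).ncard + S.ncard := Set.ncard_union_le _ _
      _ ≤ (A ∪ (D \ B)).ncard + ({v, b} : Set V).ncard + S.ncard := by
          have := Set.ncard_union_le (A ∪ (D \ B)) ({v, b} : Set V)
          omega
      _ ≤ A.ncard + (D \ B).ncard + ({v, b} : Set V).ncard + S.ncard := by
          have := Set.ncard_union_le A (D \ B)
          omega
      _ ≤ A.ncard + (D \ B).ncard + 2 + m := by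
          have h1 : ({v, b} : Set V).ncard ≤ 2 := by
            have := Set.ncard_insert_le v ({b} : Set V)
            simp only [Set.ncard_singleton] at this
            omega
          omega
  have hsplit : (D ∩ B).ncard + (D \ B).ncard = D.ncard :=
    Set.ncard_inter_add_ncard_diff_eq_ncard D B (Set.toFinite D)
  have hA2 : 2 ≤ A.ncard := by
    have h01 : f (Sum.inl 0) ≠ f (Sum.inl 1) := by
      intro h
      have := f.injective h
      simp at this
    have := Set.one_lt_ncard (Set.toFinite A) |>.mpr
      ⟨f (Sum.inl 0), hAmem _, f (Sum.inl 1), hAmem _, h01⟩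
    omega
  have hfinal : (D ∩ B).ncard ≤ A.ncard + m + 2 := by omega
  have : (B ∩ D).ncard = (D ∩ B).ncard := by rw [Set.inter_comm]
  rw [this]
  have hmul : (m + 1 + 1) * A.ncard = (m + 1) * A.ncard + A.ncard := by ring
  have hge : 2 * (m + 1) ≤ (m + 1) * A.ncard := by
    calc 2 * (m + 1) = (m + 1) * 2 := by ring
      _ ≤ (m + 1) * A.ncard := Nat.mul_le_mul_left _ hA2
  omega
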